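/- For every λ>0 there exists γ₀>0 such that for all γ∈(0,γ₀) for which (2γ)^{-1} is a positive even integer and ℓ₀:=γ^{-1/2} is a positive integer, one has |ℓ₀·Σ_{i∈ℤ} J_γ(|i|ℓ₀) − 1| ≤ 3(1+λ)γ^{1/2}. -/

import Mathlib

/-- The Kac coupling with long-range tail: `J_γ(r) = γ` if `|r| ≤ (2γ)⁻¹` and
`J_γ(r) = λ/r²` otherwise. -/
noncomputable def coupling (lam gam : ℝ) (r : ℝ) : ℝ :=
  if |r| ≤ (2 * gam)⁻¹ then gam else lam / r ^ 2

private noncomputable def kfun (n j : ℕ) : ℝ := if n < j then ((j : ℝ) ^ 2)⁻¹ else 0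

private noncomputable def gfun (gam : ℝ) (n : ℕ) (i : ℤ) : ℝ := if |i| ≤ (n : ℤ) then gam else 0

private noncomputable def hfun (lam L : ℝ) (n : ℕ) (i : ℤ) : ℝ :=
  if |i| ≤ (n : ℤ) then 0 else lam / L ^ 2 * ((i : ℝ) ^ 2)⁻¹

private lemma kfun_nonneg (n j : ℕ) : 0 ≤ kfun n j := by
  unfold kfun; split <;> positivity

private lemma ksummable (n : ℕ) : Summable (kfun n) := by
  refine Summable.of_nonneg_of_le (kfun_nonneg n) (fun j => ?_)
    (Real.summable_nat_pow_inv.mpr one_lt_two)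
  unfold kfun; split_ifs
  · exact le_rfl
  · positivity

private lemma ksum_le (n : ℕ) (hn : n ≠ 0) : ∑' j : ℕ, kfun n j ≤ (n : ℝ)⁻¹ := by
  apply Real.tsum_le_of_sum_range_le (kfun_nonneg n)
  intro N
  unfold kfun
  rw [← Finset.sum_filter]
  have hsub : (Finset.range N).filter (fun j => n < j) ⊆ Finset.Ioc n (max (n + 1) N) := by
    intro j hj
    simp only [Finset.mem_filter, Finset.mem_range] at hj
    exact Finset.mem_Ioc.2 ⟨hj.2, le_max_of_le_right hj.1.le⟩
  calc (∑ j ∈ (Finset.range N).filter (fun j => n < j), ((j : ℝ) ^ 2)⁻¹)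
      ≤ ∑ j ∈ Finset.Ioc n (max (n + 1) N), ((j : ℝ) ^ 2)⁻¹ :=
        Finset.sum_le_sum_of_subset_of_nonneg hsub (by intros; positivity)
    _ ≤ (n : ℝ)⁻¹ - ((max (n + 1) N : ℕ) : ℝ)⁻¹ :=
        sum_Ioc_inv_sq_le_sub hn ((Nat.le_succ n).trans (le_max_left _ _))
    _ ≤ (n : ℝ)⁻¹ := sub_le_self _ (by positivity)

private lemma hfun_nonneg (lam L : ℝ) (hlam : 0 ≤ lam) (n : ℕ) (i : ℤ) :
    0 ≤ hfun lam L n i := by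
  unfold hfun; split <;> positivity

private lemma hfun_nat (lam L : ℝ) (n j : ℕ) :
    hfun lam L n (j : ℤ) = lam / L ^ 2 * kfun n j := by
  unfold hfun kfun
  rw [Int.abs_natCast]
  by_cases hj : n < j
  · rw [if_neg (by exact_mod_cast not_le.mpr hj), if_pos hj]
    push_cast; ring
  · rw [if_pos (by exact_mod_cast not_lt.mp hj), if_neg hj, mul_zero]

private lemma hfun_neg (lam L : ℝ) (n j : ℕ) :
    hfun lam L n (-((j : ℤ) + 1)) = lam / L ^ 2 * kfun n (j + 1) := by
  unfold hfun kfun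
  rw [abs_neg]
  have habs : |((j : ℤ) + 1)| = ((j + 1 : ℕ) : ℤ) := by
    rw [abs_of_nonneg (by positivity)]; push_cast; ring
  rw [habs]
  by_cases hj : n < j + 1
  · rw [if_neg (by exact_mod_cast not_le.mpr hj), if_pos hj]
    push_cast; ring
  · rw [if_pos (by exact_mod_cast not_lt.mp hj), if_neg hj, mul_zero]

set_option maxHeartbeats 1000000 in
/-- **Normalization of the coupling on the `ℓ₀`-grid.** For every `λ > 0` there exists
`γ₀ > 0` such that for all `γ ∈ (0, γ₀)` for which `(2γ)⁻¹` is a positive even integer and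
`ℓ₀ := γ^{-1/2}` is a positive integer, one has
`|ℓ₀ · Σ_{i ∈ ℤ} J_γ(|i| ℓ₀) − 1| ≤ 3 (1 + λ) γ^{1/2}`. -/
theorem coupling_grid_normalization (lam : ℝ) (hlam : 0 < lam) :
    ∃ γ₀ : ℝ, 0 < γ₀ ∧
      ∀ gam : ℝ, 0 < gam → gam < γ₀ →
      (∃ M : ℕ, 0 < M ∧ Even M ∧ (M : ℝ) = (2 * gam)⁻¹) →
      ∀ ℓ₀ : ℕ, 0 < ℓ₀ → (ℓ₀ : ℝ) = gam ^ (-(1/2 : ℝ)) →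
      |(ℓ₀ : ℝ) * (∑' i : ℤ, coupling lam gam (|(i : ℝ)| * ℓ₀)) - 1|
        ≤ 3 * (1 + lam) * gam ^ (1/2 : ℝ) := by
  refine ⟨1, one_pos, ?_⟩
  rintro gam hg hg1 ⟨M, hM0, hMeven, hM⟩ ℓ₀ hℓ0 hℓ
  have hLpos : (0 : ℝ) < (ℓ₀ : ℝ) := by exact_mod_cast hℓ0
  -- basic rpow identities
  have hLsq : (ℓ₀ : ℝ) ^ 2 = gam⁻¹ := by
    rw [hℓ, ← Real.rpow_natCast (gam ^ (-(1/2 : ℝ))) 2, ← Real.rpow_mul hg.le]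
    norm_num
    exact Real.rpow_neg_one gam
  have hgamL : gam = ((ℓ₀ : ℝ) ^ 2)⁻¹ := by rw [hLsq, inv_inv]
  have hhalf : gam ^ (1/2 : ℝ) = ((ℓ₀ : ℝ))⁻¹ := by
    rw [hℓ, ← Real.rpow_neg_one (gam ^ (-(1/2 : ℝ))), ← Real.rpow_mul hg.le]
    norm_num
  -- ℓ₀ is even
  have hM2 : 2 * M = ℓ₀ ^ 2 := by
    have : ((2 * M : ℕ) : ℝ) = ((ℓ₀ ^ 2 : ℕ) : ℝ) := by
      push_cast
      rw [hM, hLsq]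
      field_simp
    exact_mod_cast this
  obtain ⟨n, hn⟩ : Even ℓ₀ := (Nat.even_pow.mp ⟨M, by rw [← hM2]; omega⟩).1
  have hn2 : ℓ₀ = 2 * n := by omega
  have hnpos : 0 < n := by omega
  have hnr : (0 : ℝ) < (n : ℝ) := by exact_mod_cast hnpos
  have hMn : M = 2 * n ^ 2 := by rw [hn2] at hM2; ring_nf at hM2 ⊢; omega
  have hLn : (ℓ₀ : ℝ) = 2 * (n : ℝ) := by rw [hn2]; push_cast; ring
  -- the condition of the coupling on the grid
  have hcond : ∀ i : ℤ, (|(|(i : ℝ)| * (ℓ₀ : ℝ))| ≤ (2 * gam)⁻¹ ↔ |i| ≤ (n : ℤ)) := by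
    intro i
    have habs : |(|(i : ℝ)| * (ℓ₀ : ℝ))| = |(i : ℝ)| * (ℓ₀ : ℝ) := abs_of_nonneg (by positivity)
    rw [habs, ← hM, hMn, hLn]
    push_cast
    constructor
    · intro hle
      have h1 : |(i : ℝ)| ≤ (n : ℝ) := by nlinarith [abs_nonneg (i : ℝ)]
      have h2 : ((|i| : ℤ) : ℝ) ≤ ((n : ℤ) : ℝ) := by push_cast; exact h1
      exact_mod_cast h2
    · intro hle
      have h1 : ((|i| : ℤ) : ℝ) ≤ ((n : ℤ) : ℝ) := by exact_mod_cast hle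
      have h2 : |(i : ℝ)| ≤ (n : ℝ) := by push_cast at h1; exact h1
      nlinarith
  -- decomposition
  have hfgh : ∀ i : ℤ, coupling lam gam (|(i : ℝ)| * (ℓ₀ : ℝ))
      = gfun gam n i + hfun lam (ℓ₀ : ℝ) n i := by
    intro i
    unfold coupling gfun hfun
    by_cases hi : |i| ≤ (n : ℤ)
    · rw [if_pos ((hcond i).mpr hi), if_pos hi, if_pos hi, add_zero]
    · rw [if_neg (fun hc => hi ((hcond i).mp hc)), if_neg hi, if_neg hi, zero_add,
        mul_pow, sq_abs]
      ring
  -- summability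
  have hks : Summable (kfun n) := ksummable n
  have hkb : ∑' j, kfun n j ≤ (n : ℝ)⁻¹ := ksum_le n hnpos.ne'
  have hks1 : Summable (fun j : ℕ => kfun n (j + 1)) := (summable_nat_add_iff 1).mpr hks
  have hhs_nat : Summable (fun j : ℕ => hfun lam (ℓ₀ : ℝ) n (j : ℤ)) := by
    simp only [hfun_nat]; exact hks.mul_left _
  have hhs_neg : Summable (fun j : ℕ => hfun lam (ℓ₀ : ℝ) n (-((j : ℤ) + 1))) := by
    simp only [hfun_neg]; exact hks1.mul_left _
  have hhs : Summable (hfun lam (ℓ₀ : ℝ) n) := Summable.of_nat_of_neg_add_one hhs_nat hhs_neg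
  have hgzero : ∀ i ∉ Finset.Icc (-(n : ℤ)) (n : ℤ), gfun gam n i = 0 := by
    intro i hi
    unfold gfun
    rw [if_neg (fun hc => hi (Finset.mem_Icc.mpr (abs_le.mp hc)))]
  have hgs : Summable (gfun gam n) := summable_of_ne_finset_zero hgzero
  -- tsum of g
  have htg : ∑' i, gfun gam n i = (2 * n + 1 : ℕ) * gam := by
    rw [tsum_eq_sum hgzero]
    have hval : ∀ i ∈ Finset.Icc (-(n : ℤ)) (n : ℤ), gfun gam n i = gam := by
      intro i hi
      unfold gfun
      rw [if_pos (abs_le.mpr (Finset.mem_Icc.mp hi))]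
    rw [Finset.sum_congr rfl hval, Finset.sum_const, Int.card_Icc]
    have hcard : ((n : ℤ) + 1 - -(n : ℤ)).toNat = 2 * n + 1 := by omega
    rw [hcard, nsmul_eq_mul]
  -- tsum of h bound
  have hth_nn : 0 ≤ ∑' i, hfun lam (ℓ₀ : ℝ) n i :=
    tsum_nonneg (hfun_nonneg lam (ℓ₀ : ℝ) hlam.le n)
  have hth : ∑' i, hfun lam (ℓ₀ : ℝ) n i ≤ lam / (ℓ₀ : ℝ) ^ 2 * (2 * (n : ℝ)⁻¹) := by
    rw [tsum_of_nat_of_neg_add_one hhs_nat hhs_neg]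
    have h1 : ∑' j : ℕ, hfun lam (ℓ₀ : ℝ) n (j : ℤ) ≤ lam / (ℓ₀ : ℝ) ^ 2 * (n : ℝ)⁻¹ := by
      simp only [hfun_nat]
      rw [tsum_mul_left]
      exact mul_le_mul_of_nonneg_left hkb (by positivity)
    have h2 : ∑' j : ℕ, hfun lam (ℓ₀ : ℝ) n (-((j : ℤ) + 1))
        ≤ lam / (ℓ₀ : ℝ) ^ 2 * (n : ℝ)⁻¹ := by
      simp only [hfun_neg]
      rw [tsum_mul_left]
      refine mul_le_mul_of_nonneg_left ?_ (by positivity)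
      calc ∑' j : ℕ, kfun n (j + 1) = ∑' j, kfun n j := by
            rw [Summable.tsum_eq_zero_add hks]
            have h0 : kfun n 0 = 0 := by unfold kfun; simp
            rw [h0, zero_add]
        _ ≤ (n : ℝ)⁻¹ := hkb
    linarith
  -- total
  have htotal : ∑' i : ℤ, coupling lam gam (|(i : ℝ)| * (ℓ₀ : ℝ))
      = (2 * n + 1 : ℕ) * gam + ∑' i, hfun lam (ℓ₀ : ℝ) n i := by
    rw [tsum_congr hfgh, Summable.tsum_add hgs hhs, htg]
  rw [htotal, hhalf]
  set T := ∑' i, hfun lam (ℓ₀ : ℝ) n i with hT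
  clear_value T
  have hn1 : (1 : ℝ) ≤ (n : ℝ) := by exact_mod_cast hnpos
  have hL2 : (2 : ℝ) ≤ (ℓ₀ : ℝ) := by rw [hLn]; linarith
  have hnear : (ℓ₀ : ℝ) * ((2 * n + 1 : ℕ) * gam) = 1 + ((ℓ₀ : ℝ))⁻¹ := by
    rw [hgamL]
    push_cast
    rw [hLn]
    field_simp
  have hTub : (ℓ₀ : ℝ) * T ≤ 4 * lam / (ℓ₀ : ℝ) ^ 2 := by
    calc (ℓ₀ : ℝ) * T ≤ (ℓ₀ : ℝ) * (lam / (ℓ₀ : ℝ) ^ 2 * (2 * (n : ℝ)⁻¹)) :=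
          mul_le_mul_of_nonneg_left hth hLpos.le
      _ = 4 * lam / (ℓ₀ : ℝ) ^ 2 := by rw [hLn]; field_simp; ring
  have hTnn : 0 ≤ (ℓ₀ : ℝ) * T := mul_nonneg hLpos.le hth_nn
  have hexp : (ℓ₀ : ℝ) * ((2 * n + 1 : ℕ) * gam + T) - 1 = ((ℓ₀ : ℝ))⁻¹ + (ℓ₀ : ℝ) * T := by
    rw [mul_add, hnear]; ring
  rw [hexp, abs_of_nonneg (add_nonneg (inv_nonneg.mpr hLpos.le) hTnn)]
  have hLinv : ((ℓ₀ : ℝ))⁻¹ ≤ 1 / 2 := by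
    rw [inv_le_comm₀ hLpos (by norm_num)]; linarith
  have h4 : 4 * lam / (ℓ₀ : ℝ) ^ 2 ≤ 2 * lam * ((ℓ₀ : ℝ))⁻¹ := by
    rw [div_le_iff₀ (by positivity)]
    have hid : 2 * lam * ((ℓ₀ : ℝ))⁻¹ * (ℓ₀ : ℝ) ^ 2 = 2 * lam * (ℓ₀ : ℝ) := by
      field_simp
    rw [hid]
    nlinarith
  have hLinvnn : (0 : ℝ) ≤ ((ℓ₀ : ℝ))⁻¹ := by positivity
  have hstep : (ℓ₀ : ℝ) * T ≤ 2 * lam * ((ℓ₀ : ℝ))⁻¹ := hTub.trans h4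
  have hfin : ((ℓ₀ : ℝ))⁻¹ + 2 * lam * ((ℓ₀ : ℝ))⁻¹ ≤ 3 * (1 + lam) * ((ℓ₀ : ℝ))⁻¹ := by
    linarith [mul_nonneg hlam.le hLinvnn]
  linarith
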